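/- Let ε > 0, d ≥ 1, k ≥ 1, and for each j = 1,…,k let X^j ∈ ℝ^{d×m_j} with m_j ≥ 1, at least one of which is a nonzero matrix. Let X = [X^1,…,X^k] ∈ ℝ^{d×m} be the horizontal concatenation with m = Σ_j m_j. Define R(X,ε) = (m/2)·log det(I_d + (d/(mε²))·XXᵀ) and R_C(X,ε) = Σ_{j=1}^k (m_j/2)·log det(I_d + (d/(m_jε²))·X^j(X^j)ᵀ). Then the rate of separability RS = R_C(X,ε)/R(X,ε) satisfies 0 < RS ≤ 1. -/

import Mathlib

open Matrix BigOperators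

/-- Horizontal concatenation `[X^1, …, X^k]` of matrices, columns indexed by a sigma type. -/
def hconcat {d k : ℕ} {m : Fin k → ℕ} (Xc : (j : Fin k) → Matrix (Fin d) (Fin (m j)) ℝ) :
    Matrix (Fin d) ((j : Fin k) × Fin (m j)) ℝ :=
  Matrix.of fun i p => Xc p.1 i p.2

/-- The coding rate `R(X, ε) = (m/2)·log det(I + (d/(m ε²))·X Xᵀ)`. -/
noncomputable def codingRate {d : ℕ} {ι : Type} [Fintype ι]
    (X : Matrix (Fin d) ι ℝ) (ε : ℝ) : ℝ :=
  ((Fintype.card ι : ℝ) / 2) *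
    Real.log
      (Matrix.det
        ((1 : Matrix (Fin d) (Fin d) ℝ) +
          ((d : ℝ) / ((Fintype.card ι : ℝ) * ε ^ 2)) • (X * Xᵀ)))

section Aux

variable {n : Type*} [Fintype n] [DecidableEq n]

lemma aux_decomp {C : Matrix n n ℝ} (hC : C.IsHermitian) (a b : ℝ) :
    a • (1 : Matrix n n ℝ) + b • C =
      (hC.eigenvectorUnitary : Matrix n n ℝ) *
        Matrix.diagonal (fun i => a + b * hC.eigenvalues i) *
        star (hC.eigenvectorUnitary : Matrix n n ℝ) := by
  have hU : (hC.eigenvectorUnitary : Matrix n n ℝ) * star (hC.eigenvectorUnitary : Matrix n n ℝ) = 1 :=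
    Matrix.mem_unitaryGroup_iff.mp hC.eigenvectorUnitary.2
  have hD : Matrix.diagonal (fun i => a + b * hC.eigenvalues i)
      = a • (1 : Matrix n n ℝ) + b • Matrix.diagonal (RCLike.ofReal ∘ hC.eigenvalues) := by
    ext i j
    by_cases h : i = j <;> simp [h, Matrix.diagonal_apply, Matrix.one_apply]
  rw [hD]
  rw [Matrix.mul_add, Matrix.add_mul, Matrix.mul_smul, Matrix.smul_mul, Matrix.mul_one,
    Matrix.mul_smul, Matrix.smul_mul, hU, ← Unitary.conjStarAlgAut_apply (S := ℝ), ← hC.spectral_theorem]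

lemma aux_det {C : Matrix n n ℝ} (hC : C.IsHermitian) (a b : ℝ) :
    (a • (1 : Matrix n n ℝ) + b • C).det = ∏ i, (a + b * hC.eigenvalues i) := by
  rw [aux_decomp hC a b]
  rw [Matrix.det_mul, Matrix.det_mul, mul_comm, ← mul_assoc, ← Matrix.det_mul,
    (Matrix.mem_unitaryGroup_iff'.mp hC.eigenvectorUnitary.2)]
  simp

lemma aux_trace {C : Matrix n n ℝ} (hC : C.IsHermitian) :
    C.trace = ∑ i, hC.eigenvalues i := by
  conv_lhs => rw [hC.spectral_theorem, Unitary.conjStarAlgAut_apply]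
  rw [Matrix.trace_mul_cycle,
    (Matrix.mem_unitaryGroup_iff'.mp hC.eigenvectorUnitary.2), Matrix.one_mul]
  simp [Matrix.trace_diagonal]

lemma aux_one_le_det {A : Matrix n n ℝ} (hA : A.PosSemidef) {c : ℝ} (hc : 0 ≤ c) :
    1 ≤ ((1 : Matrix n n ℝ) + c • A).det := by
  have h := aux_det hA.1 1 c
  rw [one_smul] at h
  rw [h]
  calc (1:ℝ) = ∏ _i : n, 1 := by simp
  _ ≤ ∏ i, (1 + c * hA.1.eigenvalues i) := by
      apply Finset.prod_le_prod (by simp) fun i _ => by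
        nlinarith [hA.eigenvalues_nonneg i]

lemma aux_one_lt_det {A : Matrix n n ℝ} (hA : A.PosSemidef) {c : ℝ} (hc : 0 < c)
    (htr : 0 < A.trace) : 1 < ((1 : Matrix n n ℝ) + c • A).det := by
  have h := aux_det hA.1 1 c
  rw [one_smul] at h
  rw [h]
  obtain ⟨i0, _, hi0⟩ : ∃ i ∈ Finset.univ, 0 < hA.1.eigenvalues i := by
    rw [aux_trace hA.1] at htr
    by_contra hcon
    push_neg at hcon
    exact absurd htr (not_lt.2 (Finset.sum_nonpos fun i hi => hcon i hi))
  calc (1:ℝ) = ∏ _i : n, 1 := by simp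
  _ < ∏ i, (1 + c * hA.1.eigenvalues i) := by
      apply Finset.prod_lt_prod (by simp) (fun i _ => by nlinarith [hA.eigenvalues_nonneg i])
      exact ⟨i0, Finset.mem_univ i0, by nlinarith⟩

omit [DecidableEq n] in
lemma aux_smul_posdef {A : Matrix n n ℝ} (hA : A.PosDef) {c : ℝ} (hc : 0 < c) :
    (c • A).PosDef := by
  exact hA.smul hc

omit [DecidableEq n] in
lemma aux_smul_psd {A : Matrix n n ℝ} (hA : A.PosSemidef) {c : ℝ} (hc : 0 ≤ c) :
    (c • A).PosSemidef := by
  exact hA.smul hc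

open scoped MatrixOrder in
lemma aux_two_point {M N : Matrix n n ℝ} (hM : M.PosDef) (hN : N.PosDef)
    {a b : ℝ} (ha : 0 < a) (hb : 0 < b) (hab : a + b = 1) :
    a * Real.log M.det + b * Real.log N.det ≤ Real.log (a • M + b • N).det := by
  set S := CFC.sqrt M with hSdef
  have hSpsd : S.PosSemidef := Matrix.nonneg_iff_posSemidef.mp (CFC.sqrt_nonneg M)
  have hSS : S * S = M := CFC.sqrt_mul_sqrt_self M (Matrix.nonneg_iff_posSemidef.mpr hM.posSemidef)
  have hdetM : 0 < M.det := hM.det_pos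
  have hdetN : 0 < N.det := hN.det_pos
  have hdetS : S.det * S.det = M.det := by rw [← Matrix.det_mul, hSS]
  have hdetS0 : S.det ≠ 0 := fun h => by simp [h] at hdetS; exact hdetM.ne' hdetS.symm
  have hSu : IsUnit S.det := isUnit_iff_ne_zero.mpr hdetS0
  have hSinv : S * S⁻¹ = 1 := Matrix.mul_nonsing_inv S hSu
  have hSinv' : S⁻¹ * S = 1 := Matrix.nonsing_inv_mul S hSu
  have hSinvH : (S⁻¹)ᴴ = S⁻¹ := by rw [Matrix.conjTranspose_nonsing_inv, hSpsd.1.eq]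
  set C := S⁻¹ * N * S⁻¹ with hCdef
  have hCpsd : C.PosSemidef := by
    have := hN.posSemidef.mul_mul_conjTranspose_same S⁻¹
    rwa [hSinvH] at this
  have hdetC : C.det = N.det / M.det := by
    rw [hCdef, Matrix.det_mul, Matrix.det_mul, Matrix.det_nonsing_inv]
    field_simp [← hdetS]
    rw [← hdetS, Ring.inverse_eq_inv']
    field_simp
  have hdetCpos : 0 < C.det := hdetC ▸ div_pos hdetN hdetM
  have hCprod : C.det = ∏ i, hCpsd.1.eigenvalues i := by
    have := hCpsd.1.det_eq_prod_eigenvalues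
    simpa using this
  have hev : ∀ i, 0 < hCpsd.1.eigenvalues i := by
    intro i
    rcases lt_or_eq_of_le (hCpsd.eigenvalues_nonneg i) with h | h
    · exact h
    · exfalso
      rw [hCprod, Finset.prod_eq_zero (Finset.mem_univ i) h.symm] at hdetCpos
      exact lt_irrefl _ hdetCpos
  have hkey : a • M + b • N = S * (a • (1 : Matrix n n ℝ) + b • C) * S := by
    rw [Matrix.mul_add, Matrix.add_mul, Matrix.mul_smul, Matrix.smul_mul, Matrix.mul_one, hSS,
      Matrix.mul_smul, Matrix.smul_mul]
    congr 2
    rw [hCdef, ← Matrix.mul_assoc, ← Matrix.mul_assoc, hSinv, Matrix.one_mul, Matrix.mul_assoc,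
      hSinv', Matrix.mul_one]
  have hdet1 : (a • M + b • N).det = M.det * (a • (1 : Matrix n n ℝ) + b • C).det := by
    rw [hkey, Matrix.det_mul, Matrix.det_mul]
    rw [mul_comm, ← mul_assoc, mul_comm S.det, hdetS]
  have hdetmid : (a • (1 : Matrix n n ℝ) + b • C).det = ∏ i, (a + b * hCpsd.1.eigenvalues i) :=
    aux_det hCpsd.1 a b
  have hfacpos : ∀ i : n, 0 < a + b * hCpsd.1.eigenvalues i := fun i => by nlinarith [hev i]
  have hlogmid : b * Real.log C.det ≤ Real.log (a • (1 : Matrix n n ℝ) + b • C).det := by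
    rw [hdetmid, Real.log_prod (fun i _ => (hfacpos i).ne'), hCprod,
      Real.log_prod (fun i _ => (hev i).ne'), Finset.mul_sum]
    apply Finset.sum_le_sum
    intro i _
    have hconc := strictConcaveOn_log_Ioi.concaveOn.2 (Set.mem_Ioi.mpr one_pos)
      (Set.mem_Ioi.mpr (hev i)) ha.le hb.le hab
    simpa [Real.log_one] using hconc
  rw [hdet1, Real.log_mul hdetM.ne'
    (ne_of_gt (by rw [hdetmid]; exact Finset.prod_pos fun i _ => hfacpos i))]
  have hlogC : Real.log C.det = Real.log N.det - Real.log M.det := by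
    rw [hdetC, Real.log_div hdetN.ne' hdetM.ne']
  have h2 : b * Real.log C.det = b * Real.log N.det - b * Real.log M.det := by
    rw [hlogC]; ring
  have h3 : a * Real.log M.det = Real.log M.det - b * Real.log M.det := by
    have hba : a = 1 - b := by linarith
    rw [hba]; ring
  linarith [hlogmid]

lemma aux_concave :
    ConcaveOn ℝ {M : Matrix n n ℝ | M.PosDef} (fun M => Real.log M.det) := by
  constructor
  · intro x hx y hy a b ha hb hab
    rcases ha.eq_or_lt with ha0 | ha0
    · have hb1 : b = 1 := by linarith
      simpa [← ha0, hb1] using hy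
    · rcases hb.eq_or_lt with hb0 | hb0
      · have ha1 : a = 1 := by linarith
        simpa [← hb0, ha1] using hx
      · exact (aux_smul_posdef hx ha0).add (aux_smul_posdef hy hb0)
  · intro x hx y hy a b ha hb hab
    rcases ha.eq_or_lt with ha0 | ha0
    · have hb1 : b = 1 := by linarith
      simp [← ha0, hb1]
    · rcases hb.eq_or_lt with hb0 | hb0
      · have ha1 : a = 1 := by linarith
        simp [← hb0, ha1]
      · simpa [smul_eq_mul] using aux_two_point hx hy ha0 hb0 hab

end Aux

theorem stmt14 (ε : ℝ) (hε : 0 < ε) (d k : ℕ) (hd : 1 ≤ d) (hk : 1 ≤ k)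
    (m : Fin k → ℕ) (hm : ∀ j, 1 ≤ m j)
    (Xc : (j : Fin k) → Matrix (Fin d) (Fin (m j)) ℝ)
    (hX : ∃ j, Xc j ≠ 0) :
    0 < (∑ j, codingRate (Xc j) ε) / codingRate (hconcat Xc) ε ∧
      (∑ j, codingRate (Xc j) ε) / codingRate (hconcat Xc) ε ≤ 1 := by
  classical
  obtain ⟨j0, hj0⟩ := hX
  have hε2 : (0:ℝ) < ε ^ 2 := by positivity
  have hd0 : (0:ℝ) < d := by exact_mod_cast hd
  have hmR : ∀ j, (0:ℝ) < m j := fun j => by exact_mod_cast hm j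
  set Mtot : ℝ := ∑ j, (m j : ℝ) with hMtotdef
  have hMpos : 0 < Mtot :=
    Finset.sum_pos (fun j _ => hmR j) ⟨j0, Finset.mem_univ j0⟩
  set c : Fin k → ℝ := fun j => (d:ℝ) / ((m j : ℝ) * ε ^ 2) with hcdef
  set ctot : ℝ := (d:ℝ) / (Mtot * ε ^ 2) with hctotdef
  have hcj : ∀ j, 0 < c j := fun j => by
    rw [hcdef]; exact div_pos hd0 (mul_pos (hmR j) hε2)
  have hctot : 0 < ctot := div_pos hd0 (mul_pos hMpos hε2)
  set A : Fin k → Matrix (Fin d) (Fin d) ℝ := fun j => Xc j * (Xc j)ᵀ with hAdef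
  have hApsd : ∀ j, (A j).PosSemidef := by
    intro j
    have := Matrix.posSemidef_self_mul_conjTranspose (Xc j)
    rwa [Matrix.conjTranspose_eq_transpose_of_trivial] at this
  -- trace facts
  have htrace : ∀ j, (A j).trace = ∑ i, ∑ p, (Xc j i p) ^ 2 := by
    intro j
    simp [hAdef, Matrix.trace, Matrix.diag, Matrix.mul_apply, sq]
  have htr_nonneg : ∀ j, 0 ≤ (A j).trace := fun j => by
    rw [htrace j]
    exact Finset.sum_nonneg fun i _ => Finset.sum_nonneg fun p _ => sq_nonneg _
  have htr_pos : 0 < (A j0).trace := by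
    rw [htrace j0]
    obtain ⟨i0, p0, hip⟩ : ∃ i p, Xc j0 i p ≠ 0 := by
      by_contra hcon
      push_neg at hcon
      exact hj0 (by ext i p; simp [hcon])
    apply Finset.sum_pos' (fun i _ => Finset.sum_nonneg fun p _ => sq_nonneg _)
    refine ⟨i0, Finset.mem_univ i0, ?_⟩
    apply Finset.sum_pos' (fun p _ => sq_nonneg _)
    exact ⟨p0, Finset.mem_univ p0, by positivity⟩
  -- the per-class matrices are positive definite
  have hPD : ∀ j, ((1 : Matrix (Fin d) (Fin d) ℝ) + c j • A j).PosDef := fun j =>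
    Matrix.PosDef.add_posSemidef Matrix.PosDef.one (aux_smul_psd (hApsd j) (hcj j).le)
  -- concatenation identity
  have hconcatA : hconcat Xc * (hconcat Xc)ᵀ = ∑ j, A j := by
    ext i l
    simp only [Matrix.mul_apply, Matrix.transpose_apply, Matrix.sum_apply, hconcat,
      Matrix.of_apply, hAdef]
    rw [← Finset.univ_sigma_univ, Finset.sum_sigma]
  have hAsum_psd : (∑ j, A j).PosSemidef := by
    apply Finset.sum_induction A Matrix.PosSemidef
      (fun _ _ ha hb => ha.add hb) Matrix.PosSemidef.zero (fun j _ => hApsd j)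
  have hAsum_tr : 0 < (∑ j, A j).trace := by
    rw [Matrix.trace_sum]
    exact Finset.sum_pos' (fun j _ => htr_nonneg j) ⟨j0, Finset.mem_univ j0, htr_pos⟩
  -- coding rates in convenient form
  have hRj : ∀ j, codingRate (Xc j) ε
      = ((m j : ℝ) / 2) * Real.log ((1 : Matrix (Fin d) (Fin d) ℝ) + c j • A j).det := by
    intro j
    simp [codingRate, hcdef, hAdef]
  have hcard : (Fintype.card ((j : Fin k) × Fin (m j)) : ℝ) = Mtot := by
    rw [hMtotdef]
    simp [Fintype.card_sigma]
  have hR : codingRate (hconcat Xc) ε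
      = (Mtot / 2) * Real.log ((1 : Matrix (Fin d) (Fin d) ℝ) + ctot • ∑ j, A j).det := by
    unfold codingRate
    rw [hconcatA, hcard, hctotdef]
  -- log nonnegativity / positivity
  have hLj_nonneg : ∀ j, 0 ≤ Real.log ((1 : Matrix (Fin d) (Fin d) ℝ) + c j • A j).det :=
    fun j => Real.log_nonneg (aux_one_le_det (hApsd j) (hcj j).le)
  have hLj0_pos : 0 < Real.log ((1 : Matrix (Fin d) (Fin d) ℝ) + c j0 • A j0).det :=
    Real.log_pos (aux_one_lt_det (hApsd j0) (hcj j0) htr_pos)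
  have hLtot_pos : 0 < Real.log ((1 : Matrix (Fin d) (Fin d) ℝ) + ctot • ∑ j, A j).det :=
    Real.log_pos (aux_one_lt_det hAsum_psd hctot hAsum_tr)
  have hRpos : 0 < codingRate (hconcat Xc) ε := by
    rw [hR]; exact mul_pos (by positivity) hLtot_pos
  have hRCpos : 0 < ∑ j, codingRate (Xc j) ε := by
    apply Finset.sum_pos' (fun j _ => by
      rw [hRj j]; exact mul_nonneg (by positivity) (hLj_nonneg j))
    refine ⟨j0, Finset.mem_univ j0, ?_⟩
    rw [hRj j0]
    exact mul_pos (div_pos (hmR j0) two_pos) hLj0_pos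
  -- Jensen's inequality
  have hsumw : ∑ j, (m j : ℝ) / Mtot = 1 := by
    rw [← Finset.sum_div, ← hMtotdef]
    exact div_self hMpos.ne'
  have hjensen := (aux_concave (n := Fin d)).le_map_sum
    (w := fun j => (m j : ℝ) / Mtot)
    (p := fun j => (1 : Matrix (Fin d) (Fin d) ℝ) + c j • A j)
    (fun j _ => div_nonneg (hmR j).le hMpos.le) hsumw (fun j _ => hPD j)
  have hcomb : ∑ j, ((m j : ℝ) / Mtot) • ((1 : Matrix (Fin d) (Fin d) ℝ) + c j • A j)
      = (1 : Matrix (Fin d) (Fin d) ℝ) + ctot • ∑ j, A j := by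
    have hterm : ∀ j, ((m j : ℝ) / Mtot) • ((1 : Matrix (Fin d) (Fin d) ℝ) + c j • A j)
        = ((m j : ℝ) / Mtot) • (1 : Matrix (Fin d) (Fin d) ℝ) + ctot • A j := by
      intro j
      rw [smul_add, smul_smul]
      congr 2
      rw [hcdef, hctotdef]
      field_simp [(hmR j).ne', hMpos.ne', hε.ne']
    rw [Finset.sum_congr rfl (fun j _ => hterm j), Finset.sum_add_distrib,
      ← Finset.sum_smul, hsumw, one_smul, ← Finset.smul_sum]
  rw [hcomb] at hjensen
  -- the subadditivity inequality
  have hineq : ∑ j, codingRate (Xc j) ε ≤ codingRate (hconcat Xc) ε := by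
    rw [hR]
    calc ∑ j, codingRate (Xc j) ε
        = ∑ j, (Mtot / 2) * (((m j : ℝ) / Mtot) •
            Real.log ((1 : Matrix (Fin d) (Fin d) ℝ) + c j • A j).det) := by
          apply Finset.sum_congr rfl
          intro j _
          rw [hRj j, smul_eq_mul]
          field_simp
      _ = (Mtot / 2) * ∑ j, ((m j : ℝ) / Mtot) •
            Real.log ((1 : Matrix (Fin d) (Fin d) ℝ) + c j • A j).det := by
          rw [Finset.mul_sum]
      _ ≤ (Mtot / 2) * Real.log ((1 : Matrix (Fin d) (Fin d) ℝ) + ctot • ∑ j, A j).det := by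
          apply mul_le_mul_of_nonneg_left hjensen (by positivity)
  exact ⟨div_pos hRCpos hRpos, (div_le_one hRpos).mpr hineq⟩
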